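/- A topological space X is normal if and only if, in the category TopCat of topological spaces, the unique morphism from the empty space to X has the left lifting property (CategoryTheory.HasLiftingProperty) against the morphism π : I₀¹ → V. -/

import Mathlib

open unitInterval

/-- The interval with doubled endpoints: `[0,1]` together with extra points
`0' = Sum.inr false` and `1' = Sum.inr true`, with `0 ⤳ 0'` and `1 ⤳ 1'`. -/
def I01 : Type := unitInterval ⊕ Bool

instance : TopologicalSpace I01 where
  IsOpen U := IsOpen (Sum.inl ⁻¹' U : Set unitInterval) ∧
    (Sum.inr false ∈ U → Sum.inl (0 : unitInterval) ∈ U) ∧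
    (Sum.inr true ∈ U → Sum.inl (1 : unitInterval) ∈ U)
  isOpen_univ := ⟨isOpen_univ, fun _ => trivial, fun _ => trivial⟩
  isOpen_inter U V hU hV := ⟨hU.1.inter hV.1,
    fun h => ⟨hU.2.1 h.1, hV.2.1 h.2⟩, fun h => ⟨hU.2.2 h.1, hV.2.2 h.2⟩⟩
  isOpen_sUnion S hS := by
    refine ⟨?_, ?_, ?_⟩
    · have hpre : (Sum.inl ⁻¹' ⋃₀ S : Set unitInterval) =
          ⋃ U ∈ S, (Sum.inl ⁻¹' U : Set unitInterval) :=
        Set.ext fun x => ⟨fun ⟨U, hU, h⟩ => Set.mem_biUnion hU h, fun h => by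
          obtain ⟨U, hU, h⟩ := Set.mem_iUnion₂.mp h
          exact ⟨U, hU, h⟩⟩
      exact hpre ▸ isOpen_biUnion fun U hU => (hS U hU).1
    · rintro ⟨U, hU, hmem⟩
      exact ⟨U, hU, (hS U hU).2.1 hmem⟩
    · rintro ⟨U, hU, hmem⟩
      exact ⟨U, hU, (hS U hU).2.2 hmem⟩

/-- The three-point space with an open point `c` and two closed points `L`, `R`. -/
inductive V : Type
  | L | c | R

instance : TopologicalSpace V where
  IsOpen U := (V.L ∈ U → V.c ∈ U) ∧ (V.R ∈ U → V.c ∈ U)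
  isOpen_univ := ⟨fun _ => trivial, fun _ => trivial⟩
  isOpen_inter U W hU hW := ⟨fun h => ⟨hU.1 h.1, hW.1 h.2⟩, fun h => ⟨hU.2 h.1, hW.2 h.2⟩⟩
  isOpen_sUnion S hS := by
    constructor
    · rintro ⟨U, hU, hmem⟩
      exact ⟨U, hU, (hS U hU).1 hmem⟩
    · rintro ⟨U, hU, hmem⟩
      exact ⟨U, hU, (hS U hU).2 hmem⟩

/-- The map `π : I₀¹ → V` collapsing `[0,1]` to the open point `c`. -/
def pi1 : I01 → V
  | Sum.inl _ => V.c
  | Sum.inr false => V.L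
  | Sum.inr true => V.R

/-- The map `ι : I₀¹ → [0,1]` collapsing the doubled endpoints. -/
def iota : I01 → unitInterval
  | Sum.inl x => x
  | Sum.inr false => 0
  | Sum.inr true => 1


theorem pi1_continuous : Continuous pi1 := by
  rw [continuous_def]
  intro U hU
  refine ⟨?_, fun h => hU.1 h, fun h => hU.2 h⟩
  by_cases hc : V.c ∈ U
  · convert isOpen_univ using 1
    ext x
    exact iff_of_true hc trivial
  · convert isOpen_empty using 1
    ext x
    exact iff_of_false hc id

/-- `π : I₀¹ → V` as a morphism of `TopCat`. -/
def piHom : TopCat.of I01 ⟶ TopCat.of V :=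
  TopCat.ofHom ⟨pi1, pi1_continuous⟩

/-- The unique morphism from the empty space to `X`, as a morphism of `TopCat`. -/
def emptyTo (X : Type) [TopologicalSpace X] : TopCat.of Empty ⟶ TopCat.of X :=
  TopCat.ofHom ⟨Empty.elim, by continuity⟩

section Aux

lemma V.isClosed_L : IsClosed ({V.L} : Set V) := by
  rw [← isOpen_compl_iff]
  exact ⟨fun h => absurd rfl h, fun _ => fun h => V.noConfusion h⟩

lemma V.isClosed_R : IsClosed ({V.R} : Set V) := by
  rw [← isOpen_compl_iff]
  exact ⟨fun _ => fun h => V.noConfusion h, fun h => absurd rfl h⟩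

/-- left open half of `I01`. -/
def setA : Set I01 := {z | match z with
  | Sum.inl x => (x : ℝ) < 1/2
  | Sum.inr b => b = false}

/-- right open half of `I01`. -/
def setB : Set I01 := {z | match z with
  | Sum.inl x => 1/2 < (x : ℝ)
  | Sum.inr b => b = true}

lemma isOpen_setA : IsOpen setA := by
  refine ⟨?_, fun _ => ?_, fun h => Bool.noConfusion h⟩
  · show IsOpen {x : unitInterval | (x : ℝ) < 1/2}
    exact isOpen_lt continuous_subtype_val continuous_const
  · show ((0 : unitInterval) : ℝ) < 1/2
    norm_num

lemma isOpen_setB : IsOpen setB := by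
  refine ⟨?_, fun h => Bool.noConfusion h, fun _ => ?_⟩
  · show IsOpen {x : unitInterval | 1/2 < (x : ℝ)}
    exact isOpen_lt continuous_const continuous_subtype_val
  · show 1/2 < ((1 : unitInterval) : ℝ)
    norm_num

lemma disjoint_setA_setB : Disjoint setA setB := by
  rw [Set.disjoint_left]
  rintro (x | b) hA hB
  · have hA' : (x : ℝ) < 1/2 := hA
    have hB' : 1/2 < (x : ℝ) := hB
    exact absurd (lt_trans hA' hB') (lt_irrefl _)
  · cases b
    · exact Bool.noConfusion hB
    · exact Bool.noConfusion hA

end Aux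

/-- `X` is normal iff `∅ → X` has the left lifting property against
`π : I₀¹ → V` in `TopCat`. -/
theorem normal_iff_hasLiftingProperty (X : Type) [TopologicalSpace X] :
    NormalSpace X ↔ CategoryTheory.HasLiftingProperty (emptyTo X) piHom := by
  classical
  constructor
  · intro hX
    constructor
    intro f g sq
    set C : Set X := ⇑g ⁻¹' {V.L} with hCdef
    set D : Set X := ⇑g ⁻¹' {V.R} with hDdef
    have hC : IsClosed C := V.isClosed_L.preimage g.hom.continuous
    have hD : IsClosed D := V.isClosed_R.preimage g.hom.continuous
    have hdis : Disjoint C D := by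
      rw [Set.disjoint_left]
      intro x hx hx'
      simp only [hCdef, hDdef, Set.mem_preimage, Set.mem_singleton_iff] at hx hx'
      rw [hx] at hx'
      exact V.noConfusion hx'
    obtain ⟨u, hu0, hu1, hmem⟩ := exists_continuous_zero_one_of_isClosed hC hD hdis
    set uI : X → unitInterval := fun x => ⟨u x, hmem x⟩ with huIdef
    have huI : Continuous uI := u.continuous.subtype_mk _
    have huI0 : ∀ x ∈ C, uI x = 0 := fun x hx => Subtype.ext (hu0 hx)
    have huI1 : ∀ x ∈ D, uI x = 1 := fun x hx => Subtype.ext (hu1 hx)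
    set ℓ : X → I01 := fun x =>
      if x ∈ C then Sum.inr false else if x ∈ D then Sum.inr true else Sum.inl (uI x)
      with hℓdef
    have hℓC : ∀ x ∈ C, ℓ x = Sum.inr false := fun x hx => by simp [hℓdef, hx]; rfl
    have hℓD : ∀ x ∈ D, ℓ x = Sum.inr true := fun x hx => by
      simp [hℓdef, hx, Set.disjoint_right.mp hdis hx]; rfl
    have hℓE : ∀ x, x ∉ C → x ∉ D → ℓ x = Sum.inl (uI x) := fun x hx hx' => by
      simp [hℓdef, hx, hx']; rfl
    have hcont : Continuous ℓ := by
      rw [continuous_def]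
      intro W hW
      obtain ⟨hWI, hWF, hWT⟩ := hW
      have hopen : IsOpen (uI ⁻¹' (Sum.inl ⁻¹' W)) := hWI.preimage huI
      by_cases hF : Sum.inr false ∈ W <;> by_cases hT : Sum.inr true ∈ W
      · have : ℓ ⁻¹' W = uI ⁻¹' (Sum.inl ⁻¹' W) := by
          ext x
          by_cases hx : x ∈ C
          · simp only [Set.mem_preimage, hℓC x hx, huI0 x hx]
            exact iff_of_true hF (hWF hF)
          by_cases hx' : x ∈ D
          · simp only [Set.mem_preimage, hℓD x hx', huI1 x hx']
            exact iff_of_true hT (hWT hT)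
          · simp only [Set.mem_preimage, hℓE x hx hx']
            exact Iff.rfl
        rw [this]; exact hopen
      · have : ℓ ⁻¹' W = uI ⁻¹' (Sum.inl ⁻¹' W) \ D := by
          ext x
          by_cases hx : x ∈ C
          · simp only [Set.mem_preimage, Set.mem_diff, hℓC x hx, huI0 x hx]
            exact iff_of_true hF ⟨hWF hF, Set.disjoint_left.mp hdis hx⟩
          by_cases hx' : x ∈ D
          · simp only [Set.mem_preimage, Set.mem_diff, hℓD x hx']
            exact iff_of_false hT (fun h => h.2 hx')
          · simp only [Set.mem_preimage, Set.mem_diff, hℓE x hx hx']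
            exact ⟨fun h => ⟨h, hx'⟩, fun h => h.1⟩
        rw [this]; exact hopen.sdiff hD
      · have : ℓ ⁻¹' W = uI ⁻¹' (Sum.inl ⁻¹' W) \ C := by
          ext x
          by_cases hx : x ∈ C
          · simp only [Set.mem_preimage, Set.mem_diff, hℓC x hx]
            exact iff_of_false hF (fun h => h.2 hx)
          by_cases hx' : x ∈ D
          · simp only [Set.mem_preimage, Set.mem_diff, hℓD x hx', huI1 x hx']
            exact iff_of_true hT ⟨hWT hT, hx⟩
          · simp only [Set.mem_preimage, Set.mem_diff, hℓE x hx hx']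
            exact ⟨fun h => ⟨h, hx⟩, fun h => h.1⟩
        rw [this]; exact hopen.sdiff hC
      · have : ℓ ⁻¹' W = uI ⁻¹' (Sum.inl ⁻¹' W) \ (C ∪ D) := by
          ext x
          by_cases hx : x ∈ C
          · simp only [Set.mem_preimage, Set.mem_diff, Set.mem_union, hℓC x hx]
            exact iff_of_false hF (fun h => h.2 (Or.inl hx))
          by_cases hx' : x ∈ D
          · simp only [Set.mem_preimage, Set.mem_diff, Set.mem_union, hℓD x hx']
            exact iff_of_false hT (fun h => h.2 (Or.inr hx'))
          · simp only [Set.mem_preimage, Set.mem_diff, Set.mem_union, hℓE x hx hx']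
            exact ⟨fun h => ⟨h, fun h' => h'.elim hx hx'⟩, fun h => h.1⟩
        rw [this]; exact hopen.sdiff (hC.union hD)
    constructor
    constructor
    refine ⟨TopCat.ofHom ⟨ℓ, hcont⟩, ?_, ?_⟩
    · ext x
      exact x.elim
    · ext x
      show pi1 (ℓ x) = g x
      by_cases hx : x ∈ C
      · rw [hℓC x hx]
        exact (Set.mem_singleton_iff.mp hx).symm
      by_cases hx' : x ∈ D
      · rw [hℓD x hx']
        exact (Set.mem_singleton_iff.mp hx').symm
      · rw [hℓE x hx hx']
        show V.c = g x
        cases h : g x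
        · exact absurd (Set.mem_singleton_iff.mpr h) hx
        · rfl
        · exact absurd (Set.mem_singleton_iff.mpr h) hx'
  · intro h
    refine ⟨fun s t hs ht hd => ?_⟩
    set gfun : X → V := fun x => if x ∈ s then V.L else if x ∈ t then V.R else V.c
      with hgdef
    have hgs : ∀ x ∈ s, gfun x = V.L := fun x hx => by simp [hgdef, hx]
    have hgt : ∀ x ∈ t, gfun x = V.R := fun x hx => by
      simp [hgdef, hx, Set.disjoint_right.mp hd hx]
    have hg : Continuous gfun := by
      rw [continuous_def]
      intro U hU
      obtain ⟨hUL, hUR⟩ := hU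
      by_cases hc : V.c ∈ U
      · by_cases hL : V.L ∈ U <;> by_cases hR : V.R ∈ U
        · have : gfun ⁻¹' U = Set.univ := by
            ext x
            simp only [Set.mem_preimage, Set.mem_univ, iff_true, hgdef]
            split_ifs <;> assumption
          rw [this]; exact isOpen_univ
        · have : gfun ⁻¹' U = tᶜ := by
            ext x
            simp only [Set.mem_preimage, Set.mem_compl_iff]
            by_cases hx : x ∈ s
            · exact iff_of_true (by rw [hgs x hx]; exact hL)
                (Set.disjoint_left.mp hd hx)
            by_cases hx' : x ∈ t
            · exact iff_of_false (by rw [hgt x hx']; exact hR) (fun h => h hx')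
            · exact iff_of_true (by simp [hgdef, hx, hx']; exact hc) hx'
          rw [this]; exact ht.isOpen_compl
        · have : gfun ⁻¹' U = sᶜ := by
            ext x
            simp only [Set.mem_preimage, Set.mem_compl_iff]
            by_cases hx : x ∈ s
            · exact iff_of_false (by rw [hgs x hx]; exact hL) (fun h => h hx)
            by_cases hx' : x ∈ t
            · exact iff_of_true (by rw [hgt x hx']; exact hR) hx
            · exact iff_of_true (by simp [hgdef, hx, hx']; exact hc) hx
          rw [this]; exact hs.isOpen_compl
        · have : gfun ⁻¹' U = (s ∪ t)ᶜ := by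
            ext x
            simp only [Set.mem_preimage, Set.mem_compl_iff, Set.mem_union]
            by_cases hx : x ∈ s
            · exact iff_of_false (by rw [hgs x hx]; exact hL) (fun h => h (Or.inl hx))
            by_cases hx' : x ∈ t
            · exact iff_of_false (by rw [hgt x hx']; exact hR)
                (fun h => h (Or.inr hx'))
            · exact iff_of_true (by simp [hgdef, hx, hx']; exact hc)
                (fun h => h.elim hx hx')
          rw [this]; exact (hs.union ht).isOpen_compl
      · have : gfun ⁻¹' U = ∅ := by
          ext x
          simp only [Set.mem_preimage, Set.mem_empty_iff_false, iff_false, hgdef]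
          split_ifs
          · exact fun h => hc (hUL h)
          · exact fun h => hc (hUR h)
          · exact hc
        rw [this]; exact isOpen_empty
    set gHom : TopCat.of X ⟶ TopCat.of V := TopCat.ofHom ⟨gfun, hg⟩ with hgh
    set fHom : TopCat.of Empty ⟶ TopCat.of I01 := TopCat.ofHom ⟨Empty.elim, by continuity⟩ with hfh
    have sq : CategoryTheory.CommSq fHom (emptyTo X) piHom gHom :=
      ⟨by ext x; exact x.elim⟩
    obtain ⟨⟨l, _, hl2⟩⟩ := (h.sq_hasLift sq).exists_lift
    have key : ∀ x, pi1 (l x) = gfun x := fun x => congrArg (fun φ => (TopCat.Hom.hom φ) x) hl2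
    refine ⟨⇑l ⁻¹' setA, ⇑l ⁻¹' setB, isOpen_setA.preimage l.hom.continuous,
      isOpen_setB.preimage l.hom.continuous, ?_, ?_, disjoint_setA_setB.preimage _⟩
    · intro x hx
      have h1 : pi1 (l x) = V.L := by rw [key x, hgs x hx]
      show l x ∈ setA
      rcases hlx : l x with y | b
      · rw [hlx] at h1; exact absurd h1 (fun h => V.noConfusion h)
      · cases b
        · show false = false; rfl
        · rw [hlx] at h1; exact absurd h1 (fun h => V.noConfusion h)
    · intro x hx
      have h1 : pi1 (l x) = V.R := by rw [key x, hgt x hx]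
      show l x ∈ setB
      rcases hlx : l x with y | b
      · rw [hlx] at h1; exact absurd h1 (fun h => V.noConfusion h)
      · cases b
        · rw [hlx] at h1; exact absurd h1 (fun h => V.noConfusion h)
        · show true = true; rfl
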